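/- Let A be a 0-1 matrix, let P' be obtained from A by appending one new row at the bottom and one new column at the right whose only 1 entry is at their intersection, and let P be obtained from P' by the same operation. Then for all m, n large enough, ex(P,m,n) = ex(P',m−1,n−1) + m + n − 1 and sat(P,m,n) = sat(P',m−1,n−1) + m + n − 1. -/

import Mathlib

/-- `M` contains the pattern `P`: there is an order-preserving selection of rows and
columns of `M` whose submatrix can be turned into `P` by changing `1`s to `0`s. -/
def Contains {k l m n : ℕ} (P : Fin k → Fin l → Bool) (M : Fin m → Fin n → Bool) : Prop :=
  ∃ r : Fin k → Fin m, ∃ c : Fin l → Fin n, StrictMono r ∧ StrictMono c ∧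
    ∀ i j, P i j = true → M (r i) (c j) = true

def Avoids {k l m n : ℕ} (P : Fin k → Fin l → Bool) (M : Fin m → Fin n → Bool) : Prop :=
  ¬ Contains P M

/-- The weight of a 0-1 matrix: the number of its `1` entries. -/
def weight {m n : ℕ} (M : Fin m → Fin n → Bool) : ℕ :=
  (Finset.univ.filter (fun p : Fin m × Fin n => M p.1 p.2 = true)).card

/-- The matrix obtained from `M` by changing the entry at `(p,q)` to `1`. -/
def setOne {m n : ℕ} (M : Fin m → Fin n → Bool) (p : Fin m) (q : Fin n) :
    Fin m → Fin n → Bool :=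
  fun i j => if i = p ∧ j = q then true else M i j

/-- `M` is saturating for `P`: it avoids `P` and flipping any `0` entry creates an
occurrence of `P`. -/
def Saturating {k l m n : ℕ} (P : Fin k → Fin l → Bool) (M : Fin m → Fin n → Bool) : Prop :=
  Avoids P M ∧ ∀ p q, M p q = false → Contains P (setOne M p q)

/-- `(r, c)` is an occurrence of `P` in `M`. -/
def IsOcc {k l m n : ℕ} (P : Fin k → Fin l → Bool) (M : Fin m → Fin n → Bool)
    (r : Fin k → Fin m) (c : Fin l → Fin n) : Prop :=
  StrictMono r ∧ StrictMono c ∧ ∀ i j, P i j = true → M (r i) (c j) = true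

/-- `M` is semisaturating for `P`: flipping any `0` entry creates a new occurrence of `P`. -/
def Semisaturating {k l m n : ℕ} (P : Fin k → Fin l → Bool) (M : Fin m → Fin n → Bool) : Prop :=
  ∀ p q, M p q = false → ∃ r c, IsOcc P (setOne M p q) r c ∧ ¬ IsOcc P M r c

/-- `ex(P,m,n)`: the maximum weight of an `m × n` matrix avoiding `P`. -/
noncomputable def exF {k l : ℕ} (P : Fin k → Fin l → Bool) (m n : ℕ) : ℕ :=
  sSup {w | ∃ M : Fin m → Fin n → Bool, Avoids P M ∧ weight M = w}

/-- `sat(P,m,n)`: the minimum weight of an `m × n` matrix saturating for `P`. -/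
noncomputable def satF {k l : ℕ} (P : Fin k → Fin l → Bool) (m n : ℕ) : ℕ :=
  sInf {w | ∃ M : Fin m → Fin n → Bool, Saturating P M ∧ weight M = w}

/-- `ssat(P,m,n)`: the minimum weight of an `m × n` matrix semisaturating for `P`. -/
noncomputable def ssatF {k l : ℕ} (P : Fin k → Fin l → Bool) (m n : ℕ) : ℕ :=
  sInf {w | ∃ M : Fin m → Fin n → Bool, Semisaturating P M ∧ weight M = w}

/-- Extend a pattern `A` by a new last row and last column whose only `1` entry is at
their intersection. -/
def extendCorner {k l : ℕ} (A : Fin k → Fin l → Bool) :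
    Fin (k + 1) → Fin (l + 1) → Bool :=
  fun i j =>
    if h : (i : ℕ) < k then
      (if h' : (j : ℕ) < l then A ⟨(i : ℕ), h⟩ ⟨(j : ℕ), h'⟩ else false)
    else decide ((j : ℕ) = l)

namespace SatEx

open Finset

variable {a b m n : ℕ}

/-! ### basic setOne / weight lemmas -/

lemma setOne_self (M : Fin m → Fin n → Bool) (p q) : setOne M p q p q = true := by
  simp [setOne]

lemma setOne_of_true {M : Fin m → Fin n → Bool} {p q x y} (h : M x y = true) :
    setOne M p q x y = true := by
  unfold setOne; split <;> simp [h]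

lemma setOne_cases {M : Fin m → Fin n → Bool} {p q x y} (h : setOne M p q x y = true) :
    (x = p ∧ y = q) ∨ M x y = true := by
  unfold setOne at h
  split at h
  · left; assumption
  · right; exact h

def wt {m n : ℕ} (M : Fin m → Fin n → Bool) : ℕ :=
  ∑ x : Fin m, ∑ y : Fin n, (if M x y = true then 1 else 0)

lemma weight_eq_wt (M : Fin m → Fin n → Bool) : weight M = wt M := by
  unfold weight wt
  rw [Finset.card_filter, ← Finset.univ_product_univ, Finset.sum_product]

lemma weight_setOne {M : Fin m → Fin n → Bool} {p q} (h : M p q = false) :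
    weight (setOne M p q) = weight M + 1 := by
  unfold weight
  have hset : (Finset.univ.filter (fun pr : Fin m × Fin n => setOne M p q pr.1 pr.2 = true))
      = insert (p, q) (Finset.univ.filter (fun pr : Fin m × Fin n => M pr.1 pr.2 = true)) := by
    ext ⟨x, y⟩
    simp only [Finset.mem_filter, Finset.mem_univ, true_and, Finset.mem_insert, Prod.mk.injEq]
    constructor
    · intro hx
      rcases setOne_cases hx with ⟨rfl, rfl⟩ | hx
      · exact Or.inl ⟨rfl, rfl⟩
      · exact Or.inr hx
    · rintro (⟨rfl, rfl⟩ | hx)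
      · exact setOne_self _ _ _
      · exact setOne_of_true hx
  rw [hset, Finset.card_insert_of_notMem (by simp [h])]

lemma weight_le (M : Fin m → Fin n → Bool) : weight M ≤ m * n := by
  calc weight M ≤ (Finset.univ : Finset (Fin m × Fin n)).card := Finset.card_filter_le _ _
  _ = m * n := by simp

/-! ### SEmax, shrink, counting -/

def SEmax {m n : ℕ} (M : Fin m → Fin n → Bool) (x : Fin m) (y : Fin n) : Prop :=
  M x y = true ∧ ∀ u v, x < u → y < v → M u v = false

instance {m n : ℕ} (M : Fin m → Fin n → Bool) (x : Fin m) (y : Fin n) :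
    Decidable (SEmax M x y) := by
  unfold SEmax; infer_instance

lemma not_SEmax {M : Fin m → Fin n → Bool} {x y} (hM : M x y = true) (h : ¬ SEmax M x y) :
    ∃ u v, x < u ∧ y < v ∧ M u v = true := by
  unfold SEmax at h
  push_neg at h
  obtain ⟨u, v, hu, hv, hMuv⟩ := h hM
  exact ⟨u, v, hu, hv, by simpa using hMuv⟩

lemma SEmax_lastRow {M : Fin (m+1) → Fin (n+1) → Bool} {y} (h : M (Fin.last m) y = true) :
    SEmax M (Fin.last m) y :=
  ⟨h, fun u _ hu _ => absurd hu (not_lt.mpr (Fin.le_last u))⟩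

lemma SEmax_lastCol {M : Fin (m+1) → Fin (n+1) → Bool} {x} (h : M x (Fin.last n) = true) :
    SEmax M x (Fin.last n) :=
  ⟨h, fun _ v _ hv => absurd hv (not_lt.mpr (Fin.le_last v))⟩

def shrink {m n : ℕ} (M : Fin (m+1) → Fin (n+1) → Bool) : Fin m → Fin n → Bool :=
  fun i j => decide (M i.castSucc j.castSucc = true ∧ ¬ SEmax M i.castSucc j.castSucc)

lemma shrink_iff {M : Fin (m+1) → Fin (n+1) → Bool} {i j} :
    shrink M i j = true ↔
      (M i.castSucc j.castSucc = true ∧ ¬ SEmax M i.castSucc j.castSucc) := by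
  simp [shrink]

lemma wt_peel (M : Fin (m+1) → Fin (n+1) → Bool) :
    wt M = (∑ x : Fin m, ∑ y : Fin n, (if M x.castSucc y.castSucc = true then 1 else 0))
      + (∑ x : Fin m, (if M x.castSucc (Fin.last n) = true then 1 else 0))
      + (∑ y : Fin n, (if M (Fin.last m) y.castSucc = true then 1 else 0))
      + (if M (Fin.last m) (Fin.last n) = true then 1 else 0) := by
  unfold wt
  have h1 : ∀ x : Fin (m+1), (∑ y : Fin (n+1), (if M x y = true then 1 else 0))
      = (∑ y : Fin n, (if M x y.castSucc = true then 1 else 0))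
        + (if M x (Fin.last n) = true then 1 else 0) := fun x =>
    Fin.sum_univ_castSucc (f := fun y => if M x y = true then 1 else 0)
  simp only [h1]
  rw [Finset.sum_add_distrib]
  rw [Fin.sum_univ_castSucc (f := fun x : Fin (m+1) =>
    ∑ y : Fin n, if M x y.castSucc = true then 1 else 0)]
  rw [Fin.sum_univ_castSucc (f := fun x : Fin (m+1) =>
    if M x (Fin.last n) = true then 1 else 0)]
  ring

def Sfin (M : Fin (m+1) → Fin (n+1) → Bool) : Finset (Fin (m+1) × Fin (n+1)) :=
  Finset.univ.filter fun pr => SEmax M pr.1 pr.2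

lemma Sfin_card_eq (M : Fin (m+1) → Fin (n+1) → Bool) :
    (Sfin M).card = wt (fun x y => decide (SEmax M x y)) := by
  unfold Sfin wt
  rw [Finset.card_filter, ← Finset.univ_product_univ, Finset.sum_product]
  simp

lemma weight_split (M : Fin (m+1) → Fin (n+1) → Bool) :
    weight M = weight (shrink M) + (Sfin M).card := by
  rw [weight_eq_wt, weight_eq_wt, Sfin_card_eq]
  rw [wt_peel M, wt_peel (fun x y => decide (SEmax M x y))]
  have hwin : ∀ (x : Fin m) (y : Fin n),
      (if M x.castSucc y.castSucc = true then 1 else 0)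
        = (if shrink M x y = true then 1 else 0)
          + (if decide (SEmax M x.castSucc y.castSucc) = true then (1:ℕ) else 0) := by
    intro x y
    by_cases hS : SEmax M x.castSucc y.castSucc
    · simp [shrink, hS, hS.1]
    · by_cases hM : M x.castSucc y.castSucc = true <;> simp [shrink, hS, hM]
  have hA : (∑ x : Fin m, ∑ y : Fin n, (if M x.castSucc y.castSucc = true then 1 else 0))
      = wt (shrink M) + (∑ x : Fin m, ∑ y : Fin n,
          (if decide (SEmax M x.castSucc y.castSucc) = true then (1:ℕ) else 0)) := by
    unfold wt
    rw [← Finset.sum_add_distrib]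
    refine Finset.sum_congr rfl fun x _ => ?_
    rw [← Finset.sum_add_distrib]
    exact Finset.sum_congr rfl fun y _ => hwin x y
  have hB : ∀ x : Fin m, (if M x.castSucc (Fin.last n) = true then (1:ℕ) else 0)
      = (if decide (SEmax M x.castSucc (Fin.last n)) = true then 1 else 0) := by
    intro x
    by_cases hM : M x.castSucc (Fin.last n) = true
    · simp [hM, SEmax_lastCol hM]
    · have : ¬ SEmax M x.castSucc (Fin.last n) := fun hS => by rw [hS.1] at hM; exact hM rfl
      simp [hM, this]
  have hC : ∀ y : Fin n, (if M (Fin.last m) y.castSucc = true then (1:ℕ) else 0)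
      = (if decide (SEmax M (Fin.last m) y.castSucc) = true then 1 else 0) := by
    intro y
    by_cases hM : M (Fin.last m) y.castSucc = true
    · simp [hM, SEmax_lastRow hM]
    · have : ¬ SEmax M (Fin.last m) y.castSucc := fun hS => by rw [hS.1] at hM; exact hM rfl
      simp [hM, this]
  have hD : (if M (Fin.last m) (Fin.last n) = true then (1:ℕ) else 0)
      = (if decide (SEmax M (Fin.last m) (Fin.last n)) = true then 1 else 0) := by
    by_cases hM : M (Fin.last m) (Fin.last n) = true
    · simp [hM, SEmax_lastRow hM]
    · have : ¬ SEmax M (Fin.last m) (Fin.last n) := fun hS => by rw [hS.1] at hM; exact hM rfl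
      simp [hM, this]
  rw [hA, Finset.sum_congr rfl (fun x _ => hB x), Finset.sum_congr rfl (fun y _ => hC y), hD]
  ring

lemma Sfin_antichain {M : Fin (m+1) → Fin (n+1) → Bool} {s t : Fin (m+1) × Fin (n+1)}
    (hs : s ∈ Sfin M) (ht : t ∈ Sfin M) (h1 : s.1 < t.1) (h2 : s.2 < t.2) : False := by
  rw [Sfin, Finset.mem_filter] at hs ht
  have := hs.2.2 t.1 t.2 h1 h2
  rw [ht.2.1] at this
  exact absurd this (by simp)

lemma Sfin_card_le (M : Fin (m+1) → Fin (n+1) → Bool) : (Sfin M).card ≤ m + n + 1 := by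
  have h := Finset.card_le_card_of_injOn
    (f := fun pr : Fin (m+1) × Fin (n+1) => pr.1.val + n - pr.2.val)
    (t := Finset.range (m + n + 1)) (s := Sfin M) ?_ ?_
  · simpa using h
  · intro pr _
    have h1 := pr.1.is_lt
    have h2 := pr.2.is_lt
    simp only [Finset.mem_coe, Finset.mem_range]
    omega
  · intro s hs t ht heq
    rw [Finset.mem_coe] at hs ht
    obtain ⟨s1, s2⟩ := s
    obtain ⟨t1, t2⟩ := t
    simp only at heq
    have hs2 := s2.is_lt
    have ht2 := t2.is_lt
    have h1 : ¬ (s1.val < t1.val ∧ s2.val < t2.val) := fun ⟨ha, hb⟩ =>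
      Sfin_antichain hs ht (Fin.lt_def.mpr ha) (Fin.lt_def.mpr hb)
    have h2 : ¬ (t1.val < s1.val ∧ t2.val < s2.val) := fun ⟨ha, hb⟩ =>
      Sfin_antichain ht hs (Fin.lt_def.mpr ha) (Fin.lt_def.mpr hb)
    have hv : s1.val = t1.val ∧ s2.val = t2.val := by omega
    rw [Prod.mk.injEq]
    exact ⟨Fin.ext hv.1, Fin.ext hv.2⟩


/-! ### extendCorner structure -/

lemma ec_castSucc {R : Fin a → Fin b → Bool} (i : Fin a) (j : Fin b) :
    extendCorner R i.castSucc j.castSucc = R i j := by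
  unfold extendCorner
  rw [dif_pos (by simpa using i.is_lt), dif_pos (by simpa using j.is_lt)]
  congr 1 <;> exact Fin.ext (by simp)

lemma ec_corner (R : Fin a → Fin b → Bool) :
    extendCorner R (Fin.last a) (Fin.last b) = true := by
  unfold extendCorner
  rw [dif_neg (by simp)]
  simp

lemma ec_dichot {R : Fin a → Fin b → Bool} {i : Fin (a+1)} {j : Fin (b+1)}
    (h : extendCorner R i j = true) :
    (i = Fin.last a ∧ j = Fin.last b) ∨ (i ≠ Fin.last a ∧ j ≠ Fin.last b) := by
  unfold extendCorner at h
  by_cases hi : (i : ℕ) < a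
  · rw [dif_pos hi] at h
    by_cases hj : (j : ℕ) < b
    · right
      constructor
      · intro hEq; rw [hEq] at hi; simp at hi
      · intro hEq; rw [hEq] at hj; simp at hj
    · rw [dif_neg hj] at h; exact absurd h (by simp)
  · rw [dif_neg hi] at h
    left
    have hj : (j : ℕ) = b := by simpa using h
    have hi' : (i : ℕ) = a := le_antisymm (Nat.lt_succ_iff.mp i.is_lt) (le_of_not_gt hi)
    exact ⟨Fin.ext (by simpa using hi'), Fin.ext (by simpa using hj)⟩

/-! ### snoc and occurrences -/

lemma strictMono_snoc {t : ℕ} {f : Fin t → Fin m} {u : Fin m}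
    (hf : StrictMono f) (hu : ∀ i, f i < u) : StrictMono (Fin.snoc f u) := by
  intro i j hij
  induction j using Fin.lastCases with
  | last =>
    obtain ⟨i', rfl⟩ := Fin.exists_castSucc_eq.mpr (Fin.lt_last_iff_ne_last.mp hij)
    rw [Fin.snoc_castSucc, Fin.snoc_last]
    exact hu i'
  | cast j' =>
    have hij' : i < Fin.last t := lt_trans hij (Fin.castSucc_lt_last j')
    obtain ⟨i', rfl⟩ := Fin.exists_castSucc_eq.mpr (Fin.lt_last_iff_ne_last.mp hij')
    rw [Fin.snoc_castSucc, Fin.snoc_castSucc]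
    exact hf (Fin.castSucc_lt_castSucc_iff.mp hij)

lemma castSucc_strictMono' : StrictMono (Fin.castSucc : Fin m → Fin (m+1)) :=
  fun _ _ h => Fin.castSucc_lt_castSucc_iff.mpr h

lemma flip_role {a b : ℕ} {R : Fin a → Fin b → Bool} {M : Fin m → Fin n → Bool} {p q}
    (hav : Avoids R M) (hC : Contains R (setOne M p q)) :
    ∃ r c, StrictMono r ∧ StrictMono c ∧
      (∀ i j, R i j = true → setOne M p q (r i) (c j) = true)
      ∧ ∃ i j, R i j = true ∧ r i = p ∧ c j = q := by
  obtain ⟨r, c, hr, hc, hval⟩ := hC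
  refine ⟨r, c, hr, hc, hval, ?_⟩
  by_contra hno
  push_neg at hno
  refine hav ⟨r, c, hr, hc, fun i j hij => ?_⟩
  rcases setOne_cases (hval i j hij) with ⟨h1, h2⟩ | h
  · exact absurd h2 (hno i j hij h1)
  · exact h

section Corner

variable {k l : ℕ} {Q : Fin (k+1) → Fin (l+1) → Bool}

/-- the corner of any `Q`-occurrence in a `P`-avoiding matrix is SE-maximal. -/
lemma occ_corner_SEmax {M : Fin (m+1) → Fin (n+1) → Bool}
    (hav : Avoids (extendCorner Q) M) {r : Fin (k+1) → Fin (m+1)} {c : Fin (l+1) → Fin (n+1)}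
    (hr : StrictMono r) (hc : StrictMono c)
    (hocc : ∀ i j, Q i j = true → M (r i) (c j) = true)
    (hQc : Q (Fin.last k) (Fin.last l) = true) :
    SEmax M (r (Fin.last k)) (c (Fin.last l)) := by
  refine ⟨hocc _ _ hQc, fun u v hu hv => ?_⟩
  by_contra hM
  have hM : M u v = true := by simpa using hM
  refine hav ⟨Fin.snoc r u, Fin.snoc c v,
    strictMono_snoc hr (fun i => lt_of_le_of_lt (hr.monotone (Fin.le_last i)) hu),
    strictMono_snoc hc (fun j => lt_of_le_of_lt (hc.monotone (Fin.le_last j)) hv), ?_⟩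
  intro i j hij
  rcases ec_dichot hij with ⟨rfl, rfl⟩ | ⟨hi, hj⟩
  · rw [Fin.snoc_last, Fin.snoc_last]; exact hM
  · obtain ⟨i', rfl⟩ := Fin.exists_castSucc_eq.mpr hi
    obtain ⟨j', rfl⟩ := Fin.exists_castSucc_eq.mpr hj
    rw [Fin.snoc_castSucc, Fin.snoc_castSucc]
    exact hocc i' j' (by rwa [ec_castSucc] at hij)

lemma exists_SEmax {M : Fin (m+1) → Fin (n+1) → Bool} (x : Fin (m+1)) (y : Fin (n+1))
    (hM : M x y = true) : ∃ u v, SEmax M u v ∧ x ≤ u ∧ y ≤ v := by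
  have key : ∀ (N : ℕ) (x : Fin (m+1)) (y : Fin (n+1)), (m - x.val) + (n - y.val) ≤ N →
      M x y = true → ∃ u v, SEmax M u v ∧ x ≤ u ∧ y ≤ v := by
    intro N
    induction N with
    | zero =>
      intro x y hxy hM
      by_cases hS : SEmax M x y
      · exact ⟨x, y, hS, le_refl _, le_refl _⟩
      · exfalso
        obtain ⟨u, v, hu, hv, _⟩ := not_SEmax hM hS
        have h1 : x.val < u.val := hu
        have h2 := u.is_lt
        omega
    | succ N ih =>
      intro x y hxy hM
      by_cases hS : SEmax M x y
      · exact ⟨x, y, hS, le_refl _, le_refl _⟩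
      · obtain ⟨u, v, hu, hv, hMuv⟩ := not_SEmax hM hS
        have h1 : x.val < u.val := hu
        have h2 : y.val < v.val := hv
        have h3 := u.is_lt
        have h4 := v.is_lt
        obtain ⟨u', v', hS', hle1, hle2⟩ := ih u v (by omega) hMuv
        exact ⟨u', v', hS', le_of_lt (lt_of_lt_of_le hu hle1),
          le_of_lt (lt_of_lt_of_le hv hle2)⟩
  exact key _ x y (le_refl _) hM

/-- flipping a `0` of a `P`-saturating matrix: either there is a genuine `1` strictly SE,
or there is a genuine `Q`-occurrence strictly NW. -/
lemma zero_cell_dichot {M : Fin (m+1) → Fin (n+1) → Bool}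
    (hsat : Saturating (extendCorner Q) M) {x : Fin (m+1)} {y : Fin (n+1)}
    (h0 : M x y = false) :
    (∃ u v, x < u ∧ y < v ∧ M u v = true) ∨
    (∃ (r : Fin (k+1) → Fin (m+1)) (c : Fin (l+1) → Fin (n+1)), StrictMono r ∧ StrictMono c ∧
      (∀ i j, Q i j = true → M (r i) (c j) = true)
      ∧ r (Fin.last k) < x ∧ c (Fin.last l) < y) := by
  obtain ⟨r, c, hr, hc, hval, i₀, j₀, hP₀, hrx, hcy⟩ := flip_role hsat.1 (hsat.2 x y h0)
  rcases ec_dichot hP₀ with ⟨rfl, rfl⟩ | ⟨hi, hj⟩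
  · right
    have hR : StrictMono (fun i : Fin (k+1) => r i.castSucc) :=
      fun u v huv => hr (Fin.castSucc_lt_castSucc_iff.mpr huv)
    have hC : StrictMono (fun j : Fin (l+1) => c j.castSucc) :=
      fun u v huv => hc (Fin.castSucc_lt_castSucc_iff.mpr huv)
    refine ⟨_, _, hR, hC, ?_, ?_, ?_⟩
    · intro i j hQ
      have hP : extendCorner Q i.castSucc j.castSucc = true := by
        rwa [ec_castSucc]
      rcases setOne_cases (hval _ _ hP) with ⟨h1, _⟩ | hMv
      · exfalso
        rw [← hrx] at h1
        exact absurd (hr.injective h1) (Fin.ne_last_of_lt (Fin.castSucc_lt_last i))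
      · exact hMv
    · rw [← hrx]; exact hr (Fin.castSucc_lt_last _)
    · rw [← hcy]; exact hc (Fin.castSucc_lt_last _)
  · left
    refine ⟨r (Fin.last _), c (Fin.last _), ?_, ?_, ?_⟩
    · rw [← hrx]; exact hr (Fin.lt_last_iff_ne_last.mpr hi)
    · rw [← hcy]; exact hc (Fin.lt_last_iff_ne_last.mpr hj)
    · have hP := ec_corner Q
      rcases setOne_cases (hval _ _ hP) with ⟨h1, _⟩ | hMv
      · exfalso
        rw [← hrx] at h1
        exact hi (hr.injective h1).symm
      · exact hMv

/-- the shrunk matrix avoids `Q` when `M` avoids `P`. -/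
lemma shrink_avoids {M : Fin (m+1) → Fin (n+1) → Bool}
    (hav : Avoids (extendCorner Q) M) (hQc : Q (Fin.last k) (Fin.last l) = true) :
    Avoids Q (shrink M) := by
  rintro ⟨r, c, hr, hc, hval⟩
  set R : Fin (k+1) → Fin (m+1) := fun i => (r i).castSucc with hR
  set C : Fin (l+1) → Fin (n+1) := fun j => (c j).castSucc with hC
  have hRm : StrictMono R := castSucc_strictMono'.comp hr
  have hCm : StrictMono C := castSucc_strictMono'.comp hc
  have hoccM : ∀ i j, Q i j = true → M (R i) (C j) = true := fun i j hij =>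
    (shrink_iff.mp (hval i j hij)).1
  have hcorner := (shrink_iff.mp (hval _ _ hQc)).2
  exact hcorner (occ_corner_SEmax hav hRm hCm hoccM hQc)

end Corner

section Corner2

variable {k l : ℕ} {Q : Fin (k+1) → Fin (l+1) → Bool}

/-- corner replacement: a `Q`-occurrence with corner weakly NW of `(p,q)` yields a
`Q`-occurrence in `setOne (shrink M) p q`. -/
lemma replacement {M : Fin (m+1) → Fin (n+1) → Bool}
    (hQc : Q (Fin.last k) (Fin.last l) = true)
    (hQd : ∀ i j, Q i j = true →
      (i = Fin.last k ∧ j = Fin.last l) ∨ (i ≠ Fin.last k ∧ j ≠ Fin.last l))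
    (p : Fin m) (q : Fin n) {r : Fin (k+1) → Fin (m+1)} {c : Fin (l+1) → Fin (n+1)}
    (hr : StrictMono r) (hc : StrictMono c)
    (hocc : ∀ i j, Q i j = true → M (r i) (c j) = true)
    (hrp : r (Fin.last k) ≤ p.castSucc) (hcq : c (Fin.last l) ≤ q.castSucc) :
    Contains Q (setOne (shrink M) p q) := by
  have hrp' : (r (Fin.last k)).val ≤ p.val := by simpa using (Fin.le_def.mp hrp)
  have hcq' : (c (Fin.last l)).val ≤ q.val := by simpa using (Fin.le_def.mp hcq)
  have hltr : ∀ i : Fin k, (r i.castSucc).val < m := fun i => by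
    have h1 : (r i.castSucc).val < (r (Fin.last k)).val := hr (Fin.castSucc_lt_last i)
    have h2 := p.is_lt
    omega
  have hltc : ∀ j : Fin l, (c j.castSucc).val < n := fun j => by
    have h1 : (c j.castSucc).val < (c (Fin.last l)).val := hc (Fin.castSucc_lt_last j)
    have h2 := q.is_lt
    omega
  refine ⟨Fin.snoc (fun i : Fin k => ⟨(r i.castSucc).val, hltr i⟩) p,
    Fin.snoc (fun j : Fin l => ⟨(c j.castSucc).val, hltc j⟩) q, ?_, ?_, ?_⟩
  · refine strictMono_snoc (fun u v huv => ?_) (fun i => ?_)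
    · exact Fin.lt_def.mpr (Fin.lt_def.mp (hr (Fin.castSucc_lt_castSucc_iff.mpr huv)))
    · have h1 : (r i.castSucc).val < (r (Fin.last k)).val := hr (Fin.castSucc_lt_last i)
      exact Fin.lt_def.mpr (show (r i.castSucc).val < p.val by omega)
  · refine strictMono_snoc (fun u v huv => ?_) (fun j => ?_)
    · exact Fin.lt_def.mpr (Fin.lt_def.mp (hc (Fin.castSucc_lt_castSucc_iff.mpr huv)))
    · have h1 : (c j.castSucc).val < (c (Fin.last l)).val := hc (Fin.castSucc_lt_last j)
      exact Fin.lt_def.mpr (show (c j.castSucc).val < q.val by omega)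
  · intro i j hij
    rcases hQd i j hij with ⟨rfl, rfl⟩ | ⟨hi, hj⟩
    · rw [Fin.snoc_last, Fin.snoc_last]
      exact setOne_self _ _ _
    · obtain ⟨i', rfl⟩ := Fin.exists_castSucc_eq.mpr hi
      obtain ⟨j', rfl⟩ := Fin.exists_castSucc_eq.mpr hj
      rw [Fin.snoc_castSucc, Fin.snoc_castSucc]
      apply setOne_of_true
      rw [shrink_iff]
      have e1 : ((⟨(r i'.castSucc).val, hltr i'⟩ : Fin m)).castSucc = r i'.castSucc :=
        Fin.ext (by simp)
      have e2 : ((⟨(c j'.castSucc).val, hltc j'⟩ : Fin n)).castSucc = c j'.castSucc :=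
        Fin.ext (by simp)
      rw [e1, e2]
      refine ⟨hocc _ _ hij, fun hS => ?_⟩
      have := hS.2 (r (Fin.last k)) (c (Fin.last l)) (hr (Fin.castSucc_lt_last i'))
        (hc (Fin.castSucc_lt_last j'))
      rw [hocc _ _ hQc] at this
      exact absurd this (by simp)

/-- occurrence transfer: a `Q`-occurrence in `setOne M pc qc` strictly NW of a genuine
`1` of `M` yields a `Q`-occurrence in `setOne (shrink M) p q`. -/
lemma transfer {M : Fin (m+1) → Fin (n+1) → Bool}
    (p : Fin m) (q : Fin n) {r : Fin (k+1) → Fin (m+1)} {c : Fin (l+1) → Fin (n+1)}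
    (hr : StrictMono r) (hc : StrictMono c)
    (hocc : ∀ i j, Q i j = true → setOne M p.castSucc q.castSucc (r i) (c j) = true)
    {U : Fin (m+1)} {V : Fin (n+1)} (hU : r (Fin.last k) < U) (hV : c (Fin.last l) < V)
    (hMUV : M U V = true) :
    Contains Q (setOne (shrink M) p q) := by
  have hltr : ∀ i, (r i).val < m := fun i => by
    have h1 : (r i).val ≤ (r (Fin.last k)).val := Fin.le_def.mp (hr.monotone (Fin.le_last i))
    have h2 : (r (Fin.last k)).val < U.val := hU
    have h3 := U.is_lt
    omega
  have hltc : ∀ j, (c j).val < n := fun j => by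
    have h1 : (c j).val ≤ (c (Fin.last l)).val := Fin.le_def.mp (hc.monotone (Fin.le_last j))
    have h2 : (c (Fin.last l)).val < V.val := hV
    have h3 := V.is_lt
    omega
  refine ⟨fun i => ⟨(r i).val, hltr i⟩, fun j => ⟨(c j).val, hltc j⟩,
    fun u v huv => Fin.lt_def.mpr (Fin.lt_def.mp (hr huv)),
    fun u v huv => Fin.lt_def.mpr (Fin.lt_def.mp (hc huv)), ?_⟩
  intro i j hij
  rcases setOne_cases (hocc i j hij) with ⟨h1, h2⟩ | hMv
  · have e1 : (⟨(r i).val, hltr i⟩ : Fin m) = p :=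
      Fin.ext (show (r i).val = p.val by rw [h1]; simp)
    have e2 : (⟨(c j).val, hltc j⟩ : Fin n) = q :=
      Fin.ext (show (c j).val = q.val by rw [h2]; simp)
    show setOne (shrink M) p q ⟨(r i).val, hltr i⟩ ⟨(c j).val, hltc j⟩ = true
    rw [e1, e2]
    exact setOne_self _ _ _
  · apply setOne_of_true
    rw [shrink_iff]
    have e1 : ((⟨(r i).val, hltr i⟩ : Fin m)).castSucc = r i := Fin.ext (by simp)
    have e2 : ((⟨(c j).val, hltc j⟩ : Fin n)).castSucc = c j := Fin.ext (by simp)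
    rw [e1, e2]
    refine ⟨hMv, fun hS => ?_⟩
    have := hS.2 U V (lt_of_le_of_lt (hr.monotone (Fin.le_last i)) hU)
      (lt_of_le_of_lt (hc.monotone (Fin.le_last j)) hV)
    rw [hMUV] at this
    exact absurd this (by simp)

/-- key: shrinking a `P`-saturating matrix gives a `Q`-saturating matrix. -/
lemma shrink_saturating {M : Fin (m+1) → Fin (n+1) → Bool}
    (hQc : Q (Fin.last k) (Fin.last l) = true)
    (hQd : ∀ i j, Q i j = true →
      (i = Fin.last k ∧ j = Fin.last l) ∨ (i ≠ Fin.last k ∧ j ≠ Fin.last l))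
    (hsat : Saturating (extendCorner Q) M) :
    Saturating Q (shrink M) := by
  refine ⟨shrink_avoids hsat.1 hQc, fun p q h0 => ?_⟩
  have h0' : M p.castSucc q.castSucc = false ∨ SEmax M p.castSucc q.castSucc := by
    by_cases hM : M p.castSucc q.castSucc = true
    · right
      by_contra hS
      rw [shrink_iff.mpr ⟨hM, hS⟩] at h0
      exact absurd h0 (by simp)
    · left; simpa using hM
  rcases h0' with hM0 | hSE
  · obtain ⟨r, c, hr, hc, hval, i₀, j₀, hP₀, hrx, hcy⟩ := flip_role hsat.1 (hsat.2 _ _ hM0)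
    have hrm : StrictMono (fun i : Fin (k+1) => r i.castSucc) :=
      fun u v huv => hr (Fin.castSucc_lt_castSucc_iff.mpr huv)
    have hcm : StrictMono (fun j : Fin (l+1) => c j.castSucc) :=
      fun u v huv => hc (Fin.castSucc_lt_castSucc_iff.mpr huv)
    rcases ec_dichot hP₀ with ⟨rfl, rfl⟩ | ⟨hi, hj⟩
    · -- flipped cell used at the corner of `P`: genuine `Q`-occurrence NW, replace corner
      refine replacement hQc hQd p q hrm hcm (fun i j hij => ?_) ?_ ?_
      · have hP : extendCorner Q i.castSucc j.castSucc = true := by rwa [ec_castSucc]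
        rcases setOne_cases (hval _ _ hP) with ⟨h1, _⟩ | hMv
        · exfalso
          rw [← hrx] at h1
          exact absurd (hr.injective h1) (Fin.ne_last_of_lt (Fin.castSucc_lt_last i))
        · exact hMv
      · rw [← hrx]; exact le_of_lt (hr (Fin.castSucc_lt_last _))
      · rw [← hcy]; exact le_of_lt (hc (Fin.castSucc_lt_last _))
    · -- flipped cell used strictly inside the `Q`-part: transfer the occurrence
      have hMc : M (r (Fin.last _)) (c (Fin.last _)) = true := by
        rcases setOne_cases (hval _ _ (ec_corner Q)) with ⟨h1, _⟩ | hMv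
        · exfalso
          rw [← hrx] at h1
          exact hi (hr.injective h1).symm
        · exact hMv
      refine transfer p q hrm hcm (fun i j hij => ?_) (hr (Fin.castSucc_lt_last _))
        (hc (Fin.castSucc_lt_last _)) hMc
      · refine hval _ _ ?_
        rwa [ec_castSucc]
  · -- the cell was an SE-maximal 1 of `M`; flip just SE of it
    have hU₀ : p.castSucc < p.succ := Fin.castSucc_lt_succ
    have hV₀ : q.castSucc < q.succ := Fin.castSucc_lt_succ
    have h00 : M p.succ q.succ = false := hSE.2 _ _ hU₀ hV₀
    obtain ⟨r, c, hr, hc, hval, i₀, j₀, hP₀, hrx, hcy⟩ := flip_role hsat.1 (hsat.2 _ _ h00)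
    have hrm : StrictMono (fun i : Fin (k+1) => r i.castSucc) :=
      fun u v huv => hr (Fin.castSucc_lt_castSucc_iff.mpr huv)
    have hcm : StrictMono (fun j : Fin (l+1) => c j.castSucc) :=
      fun u v huv => hc (Fin.castSucc_lt_castSucc_iff.mpr huv)
    rcases ec_dichot hP₀ with ⟨rfl, rfl⟩ | ⟨hi, hj⟩
    · refine replacement hQc hQd p q hrm hcm (fun i j hij => ?_) ?_ ?_
      · have hP : extendCorner Q i.castSucc j.castSucc = true := by rwa [ec_castSucc]
        rcases setOne_cases (hval _ _ hP) with ⟨h1, _⟩ | hMv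
        · exfalso
          rw [← hrx] at h1
          exact absurd (hr.injective h1) (Fin.ne_last_of_lt (Fin.castSucc_lt_last i))
        · exact hMv
      · have h1 : (r ((Fin.last k).castSucc)).val < (r (Fin.last (k+1))).val :=
          hr (Fin.castSucc_lt_last _)
        rw [hrx] at h1
        refine Fin.le_def.mpr ?_
        have : (p.succ : Fin (m+1)).val = p.val + 1 := by simp
        simp only [Fin.coe_castSucc]
        omega
      · have h1 : (c ((Fin.last l).castSucc)).val < (c (Fin.last (l+1))).val :=
          hc (Fin.castSucc_lt_last _)
        rw [hcy] at h1
        refine Fin.le_def.mpr ?_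
        have : (q.succ : Fin (n+1)).val = q.val + 1 := by simp
        simp only [Fin.coe_castSucc]
        omega
    · exfalso
      have hMc : M (r (Fin.last _)) (c (Fin.last _)) = true := by
        rcases setOne_cases (hval _ _ (ec_corner Q)) with ⟨h1, _⟩ | hMv
        · exfalso
          rw [← hrx] at h1
          exact hi (hr.injective h1).symm
        · exact hMv
      have hlt1 : p.castSucc < r (Fin.last (k+1)) := by
        have : r i₀ < r (Fin.last (k+1)) := hr (Fin.lt_last_iff_ne_last.mpr hi)
        rw [hrx] at this
        exact lt_trans hU₀ this
      have hlt2 : q.castSucc < c (Fin.last (l+1)) := by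
        have : c j₀ < c (Fin.last (l+1)) := hc (Fin.lt_last_iff_ne_last.mpr hj)
        rw [hcy] at this
        exact lt_trans hV₀ this
      have := hSE.2 _ _ hlt1 hlt2
      rw [hMc] at this
      exact absurd this (by simp)

end Corner2

section Grow

variable {k l : ℕ} {Q : Fin (k+1) → Fin (l+1) → Bool}

def grow {m n : ℕ} (M : Fin m → Fin n → Bool) : Fin (m+1) → Fin (n+1) → Bool :=
  fun x y => if h : x.val < m ∧ y.val < n then M ⟨x.val, h.1⟩ ⟨y.val, h.2⟩ else true

lemma grow_castSucc (M : Fin m → Fin n → Bool) (x : Fin m) (y : Fin n) :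
    grow M x.castSucc y.castSucc = M x y := by
  unfold grow
  rw [dif_pos (⟨by simp, by simp⟩ : (x.castSucc.val < m ∧ y.castSucc.val < n))]
  congr 1 <;> exact Fin.ext (by simp)

lemma grow_last_row (M : Fin m → Fin n → Bool) (y : Fin (n+1)) :
    grow M (Fin.last m) y = true := by
  unfold grow
  rw [dif_neg (by simp)]

lemma grow_last_col (M : Fin m → Fin n → Bool) (x : Fin (m+1)) :
    grow M x (Fin.last n) = true := by
  unfold grow
  rw [dif_neg (by simp)]

lemma grow_avoids {M : Fin m → Fin n → Bool} (hav : Avoids Q M) :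
    Avoids (extendCorner Q) (grow M) := by
  rintro ⟨r, c, hr, hc, hval⟩
  have hltr : ∀ i : Fin (k+1), (r i.castSucc).val < m := fun i => by
    have h1 : (r i.castSucc).val < (r (Fin.last (k+1))).val := hr (Fin.castSucc_lt_last i)
    have h2 := (r (Fin.last (k+1))).is_lt
    omega
  have hltc : ∀ j : Fin (l+1), (c j.castSucc).val < n := fun j => by
    have h1 : (c j.castSucc).val < (c (Fin.last (l+1))).val := hc (Fin.castSucc_lt_last j)
    have h2 := (c (Fin.last (l+1))).is_lt
    omega
  refine hav ⟨fun i => ⟨(r i.castSucc).val, hltr i⟩, fun j => ⟨(c j.castSucc).val, hltc j⟩,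
    fun u v huv => Fin.lt_def.mpr
      (Fin.lt_def.mp (hr (Fin.castSucc_lt_castSucc_iff.mpr huv))),
    fun u v huv => Fin.lt_def.mpr
      (Fin.lt_def.mp (hc (Fin.castSucc_lt_castSucc_iff.mpr huv))), ?_⟩
  intro i j hij
  have hP : extendCorner Q i.castSucc j.castSucc = true := by rwa [ec_castSucc]
  have hv := hval _ _ hP
  have e1 : ((⟨(r i.castSucc).val, hltr i⟩ : Fin m)).castSucc = r i.castSucc :=
    Fin.ext (by simp)
  have e2 : ((⟨(c j.castSucc).val, hltc j⟩ : Fin n)).castSucc = c j.castSucc :=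
    Fin.ext (by simp)
  show M ⟨(r i.castSucc).val, hltr i⟩ ⟨(c j.castSucc).val, hltc j⟩ = true
  rw [← grow_castSucc M, e1, e2]
  exact hv

lemma grow_weight (M : Fin m → Fin n → Bool) :
    weight (grow M) = weight M + (m + n + 1) := by
  rw [weight_eq_wt, weight_eq_wt, wt_peel]
  have h1 : (∑ x : Fin m, ∑ y : Fin n,
      (if grow M x.castSucc y.castSucc = true then 1 else 0)) = wt M := by
    unfold wt
    refine Finset.sum_congr rfl fun x _ => Finset.sum_congr rfl fun y _ => ?_
    rw [grow_castSucc]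
  have h2 : (∑ x : Fin m, (if grow M x.castSucc (Fin.last n) = true then (1:ℕ) else 0)) = m := by
    simp [grow_last_col]
  have h3 : (∑ y : Fin n, (if grow M (Fin.last m) y.castSucc = true then (1:ℕ) else 0)) = n := by
    simp [grow_last_row]
  rw [h1, h2, h3, if_pos (grow_last_row M (Fin.last n))]
  ring

lemma grow_saturating {M : Fin m → Fin n → Bool}
    (hsat : Saturating Q M) : Saturating (extendCorner Q) (grow M) := by
  refine ⟨grow_avoids hsat.1, fun x y h0 => ?_⟩
  have hx : x.val < m ∧ y.val < n := by
    by_contra h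
    unfold grow at h0
    rw [dif_neg h] at h0
    exact absurd h0 (by simp)
  have hMpq : M ⟨x.val, hx.1⟩ ⟨y.val, hx.2⟩ = false := by
    have e1 : (⟨x.val, hx.1⟩ : Fin m).castSucc = x := Fin.ext (by simp)
    have e2 : (⟨y.val, hx.2⟩ : Fin n).castSucc = y := Fin.ext (by simp)
    rw [← grow_castSucc M, e1, e2]
    exact h0
  obtain ⟨r, c, hr, hc, hval⟩ := hsat.2 _ _ hMpq
  refine ⟨Fin.snoc (fun i => (r i).castSucc) (Fin.last m),
    Fin.snoc (fun j => (c j).castSucc) (Fin.last n),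
    strictMono_snoc (fun u v huv => Fin.castSucc_lt_castSucc_iff.mpr (hr huv))
      (fun i => Fin.castSucc_lt_last _),
    strictMono_snoc (fun u v huv => Fin.castSucc_lt_castSucc_iff.mpr (hc huv))
      (fun j => Fin.castSucc_lt_last _), ?_⟩
  intro i j hij
  rcases ec_dichot hij with ⟨rfl, rfl⟩ | ⟨hi, hj⟩
  · rw [Fin.snoc_last, Fin.snoc_last]
    exact setOne_of_true (grow_last_row M _)
  · obtain ⟨i', rfl⟩ := Fin.exists_castSucc_eq.mpr hi
    obtain ⟨j', rfl⟩ := Fin.exists_castSucc_eq.mpr hj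
    rw [Fin.snoc_castSucc, Fin.snoc_castSucc]
    have hQ : Q i' j' = true := by rwa [ec_castSucc] at hij
    rcases setOne_cases (hval _ _ hQ) with ⟨h1, h2⟩ | hMv
    · rw [h1, h2]
      have e1 : (⟨x.val, hx.1⟩ : Fin m).castSucc = x := Fin.ext (by simp)
      have e2 : (⟨y.val, hx.2⟩ : Fin n).castSucc = y := Fin.ext (by simp)
      rw [e1, e2]
      exact setOne_self _ _ _
    · apply setOne_of_true
      rw [grow_castSucc]
      exact hMv

end Grow

section Lower

variable {k l : ℕ} {Q : Fin (k+1) → Fin (l+1) → Bool}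

/-- every "difference diagonal" contains an SE-maximal `1` of a `P`-saturating matrix. -/
lemma realize_diag {M : Fin (m+1) → Fin (n+1) → Bool}
    (hsat : Saturating (extendCorner Q) M) (hQc : Q (Fin.last k) (Fin.last l) = true)
    (t : ℕ) (ht : t ≤ m + n) :
    ∃ s : Fin (m+1) × Fin (n+1), SEmax M s.1 s.2 ∧ s.1.val + n = s.2.val + t := by
  by_contra hno
  push_neg at hno
  classical
  have percell : ∀ x : ℕ, t - n ≤ x → x ≤ min m t →
      (∃ s : Fin (m+1) × Fin (n+1), SEmax M s.1 s.2 ∧ x < s.1.val ∧ x + n - t < s.2.val) ∨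
      (∃ s : Fin (m+1) × Fin (n+1), SEmax M s.1 s.2 ∧ s.1.val < x ∧ s.2.val < x + n - t) := by
    intro x hx0 hx1
    have hxm : x ≤ m := le_trans hx1 (min_le_left _ _)
    have hxt : x ≤ t := le_trans hx1 (min_le_right _ _)
    set cx : Fin (m+1) := ⟨x, by omega⟩ with hcx
    set cy : Fin (n+1) := ⟨x + n - t, by omega⟩ with hcy
    have ecx : cx.val = x := rfl
    have ecy : cy.val = x + n - t := rfl
    by_cases hM : M cx cy = true
    · have hnS : ¬ SEmax M cx cy := fun hS =>
        hno (cx, cy) hS (show x + n = (x + n - t) + t by omega)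
      obtain ⟨u, v, hu, hv, hMuv⟩ := not_SEmax hM hnS
      obtain ⟨u', v', hS', hle1, hle2⟩ := exists_SEmax u v hMuv
      left
      refine ⟨(u', v'), hS', ?_, ?_⟩
      · show x < u'.val
        have h1 : x < u.val := Fin.lt_def.mp hu
        have h2 : u.val ≤ u'.val := hle1
        omega
      · show x + n - t < v'.val
        have h1 : x + n - t < v.val := Fin.lt_def.mp hv
        have h2 : v.val ≤ v'.val := hle2
        omega
    · have hM0 : M cx cy = false := by simpa using hM
      rcases zero_cell_dichot hsat hM0 with ⟨u, v, hu, hv, hMuv⟩ | ⟨r, c, hr, hc, hocc, hrx, hcyy⟩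
      · obtain ⟨u', v', hS', hle1, hle2⟩ := exists_SEmax u v hMuv
        left
        refine ⟨(u', v'), hS', ?_, ?_⟩
        · show x < u'.val
          have h1 : x < u.val := Fin.lt_def.mp hu
          have h2 : u.val ≤ u'.val := hle1
          omega
        · show x + n - t < v'.val
          have h1 : x + n - t < v.val := Fin.lt_def.mp hv
          have h2 : v.val ≤ v'.val := hle2
          omega
      · right
        refine ⟨(r (Fin.last k), c (Fin.last l)),
          occ_corner_SEmax hsat.1 hr hc hocc hQc, ?_, ?_⟩
        · show (r (Fin.last k)).val < x
          exact Fin.lt_def.mp hrx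
        · show (c (Fin.last l)).val < x + n - t
          exact Fin.lt_def.mp hcyy
  have hE0 : ∃ s : Fin (m+1) × Fin (n+1), SEmax M s.1 s.2 ∧
      (t - n) < s.1.val ∧ (t - n) + n - t < s.2.val := by
    rcases percell (t - n) (le_refl _) (by omega) with h | ⟨s, hS, h1, h2⟩
    · exact h
    · exfalso; omega
  set T : Finset ℕ := (Finset.Icc (t - n) (min m t)).filter
    (fun x => ∃ s : Fin (m+1) × Fin (n+1), SEmax M s.1 s.2 ∧ x < s.1.val ∧ x + n - t < s.2.val)
    with hT
  have hTne : T.Nonempty := by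
    refine ⟨t - n, ?_⟩
    rw [hT, Finset.mem_filter]
    exact ⟨Finset.mem_Icc.mpr ⟨le_refl _, by omega⟩, hE0⟩
  set u := T.max' hTne with hudef
  have humem := Finset.mem_filter.mp (T.max'_mem hTne)
  obtain ⟨hIcc, s₁, hs₁, h11, h12⟩ := humem
  obtain ⟨hu0, hu1⟩ := Finset.mem_Icc.mp hIcc
  have hs11 := s₁.1.is_lt
  have hs12 := s₁.2.is_lt
  have hnE1 : u < min m t := by
    rcases lt_or_eq_of_le hu1 with h | h
    · exact h
    · exfalso; omega
  have hmem2 : t - n ≤ u + 1 ∧ u + 1 ≤ min m t := ⟨by omega, by omega⟩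
  have hnE2 : ¬ (∃ s : Fin (m+1) × Fin (n+1), SEmax M s.1 s.2 ∧
      u + 1 < s.1.val ∧ (u + 1) + n - t < s.2.val) := by
    intro hE
    have hmemT : u + 1 ∈ T := by
      rw [hT]
      rw [Finset.mem_filter]
      exact ⟨Finset.mem_Icc.mpr hmem2, hE⟩
    have := T.le_max' _ hmemT
    omega
  rcases percell (u + 1) hmem2.1 hmem2.2 with hE | ⟨s₂, hs₂, h21, h22⟩
  · exact hnE2 hE
  · have hlt1 : s₂.1 < s₁.1 := Fin.lt_def.mpr (by omega)
    have hlt2 : s₂.2 < s₁.2 := Fin.lt_def.mpr (by omega)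
    have := hs₂.2 s₁.1 s₁.2 hlt1 hlt2
    rw [hs₁.1] at this
    exact absurd this (by simp)

lemma Sfin_card_ge {M : Fin (m+1) → Fin (n+1) → Bool}
    (hsat : Saturating (extendCorner Q) M) (hQc : Q (Fin.last k) (Fin.last l) = true) :
    m + n + 1 ≤ (Sfin M).card := by
  classical
  have h := Finset.card_le_card_of_surjOn
    (s := Sfin M) (t := Finset.range (m + n + 1))
    (fun s : Fin (m+1) × Fin (n+1) => s.1.val + n - s.2.val) ?_
  · simpa using h
  · intro w hw
    rw [Finset.coe_range, Set.mem_Iio] at hw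
    obtain ⟨s, hS, he⟩ := realize_diag hsat hQc w (by omega)
    refine ⟨s, ?_, ?_⟩
    · rw [Finset.mem_coe, Sfin, Finset.mem_filter]
      exact ⟨Finset.mem_univ _, hS⟩
    · show s.1.val + n - s.2.val = w
      omega

end Lower

section Assemble

variable {a' b' : ℕ}

lemma exSet_nonempty (R : Fin a' → Fin b' → Bool) (hR : ∃ i j, R i j = true) (m n : ℕ) :
    {w | ∃ M : Fin m → Fin n → Bool, Avoids R M ∧ weight M = w}.Nonempty := by
  refine ⟨weight (fun (_ : Fin m) (_ : Fin n) => false), fun _ _ => false, ?_, rfl⟩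
  rintro ⟨r, c, -, -, hv⟩
  obtain ⟨i, j, hij⟩ := hR
  exact absurd (hv i j hij) (by simp)

lemma exSet_bdd (R : Fin a' → Fin b' → Bool) (m n : ℕ) :
    BddAbove {w | ∃ M : Fin m → Fin n → Bool, Avoids R M ∧ weight M = w} := by
  refine ⟨m * n, ?_⟩
  rintro w ⟨M, -, rfl⟩
  exact weight_le M

lemma le_exF {R : Fin a' → Fin b' → Bool} {m n : ℕ} {M : Fin m → Fin n → Bool}
    (hav : Avoids R M) : weight M ≤ exF R m n :=
  le_csSup (exSet_bdd R m n) ⟨M, hav, rfl⟩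

lemma exF_mem (R : Fin a' → Fin b' → Bool) (hR : ∃ i j, R i j = true) (m n : ℕ) :
    ∃ M : Fin m → Fin n → Bool, Avoids R M ∧ weight M = exF R m n :=
  Nat.sSup_mem (exSet_nonempty R hR m n) (exSet_bdd R m n)

lemma satSet_nonempty (R : Fin a' → Fin b' → Bool) (hR : ∃ i j, R i j = true) (m n : ℕ) :
    {w | ∃ M : Fin m → Fin n → Bool, Saturating R M ∧ weight M = w}.Nonempty := by
  obtain ⟨M, hav, hw⟩ := exF_mem R hR m n
  refine ⟨weight M, M, ⟨hav, fun p q h0 => ?_⟩, rfl⟩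
  by_contra hc
  have hmem : weight (setOne M p q) ≤ exF R m n := le_exF hc
  rw [weight_setOne h0, hw] at hmem
  omega

lemma satF_le {R : Fin a' → Fin b' → Bool} {m n : ℕ} {M : Fin m → Fin n → Bool}
    (hs : Saturating R M) : satF R m n ≤ weight M :=
  Nat.sInf_le ⟨M, hs, rfl⟩

lemma satF_mem (R : Fin a' → Fin b' → Bool) (hR : ∃ i j, R i j = true) (m n : ℕ) :
    ∃ M : Fin m → Fin n → Bool, Saturating R M ∧ weight M = satF R m n :=
  Nat.sInf_mem (satSet_nonempty R hR m n)

variable {k l : ℕ} (Q : Fin (k+1) → Fin (l+1) → Bool)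

theorem ex_step (hQc : Q (Fin.last k) (Fin.last l) = true) (m n : ℕ) :
    exF (extendCorner Q) (m+1) (n+1) = exF Q m n + (m + n + 1) := by
  apply le_antisymm
  · refine csSup_le (exSet_nonempty _ ⟨_, _, ec_corner Q⟩ _ _) ?_
    rintro w ⟨M, hav, rfl⟩
    rw [weight_split M]
    have h1 : weight (shrink M) ≤ exF Q m n := le_exF (shrink_avoids hav hQc)
    have h2 := Sfin_card_le M
    omega
  · obtain ⟨M, hav, hw⟩ := exF_mem Q ⟨_, _, hQc⟩ m n
    have h := le_exF (grow_avoids hav)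
    rw [grow_weight, hw] at h
    exact h

theorem sat_step (hQc : Q (Fin.last k) (Fin.last l) = true)
    (hQd : ∀ i j, Q i j = true →
      (i = Fin.last k ∧ j = Fin.last l) ∨ (i ≠ Fin.last k ∧ j ≠ Fin.last l))
    (m n : ℕ) :
    satF (extendCorner Q) (m+1) (n+1) = satF Q m n + (m + n + 1) := by
  apply le_antisymm
  · obtain ⟨M, hs, hw⟩ := satF_mem Q ⟨_, _, hQc⟩ m n
    have h := satF_le (grow_saturating hs)
    rw [grow_weight, hw] at h
    exact h
  · refine le_csInf (satSet_nonempty _ ⟨_, _, ec_corner Q⟩ _ _) ?_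
    rintro w ⟨M, hs, rfl⟩
    rw [weight_split M]
    have h1 : satF Q m n ≤ weight (shrink M) := satF_le (shrink_saturating hQc hQd hs)
    have h2 := Sfin_card_ge hs hQc
    omega

end Assemble

end SatEx

/-- with `P' = extendCorner A` and `P = extendCorner P'`, for all
`m, n` large enough, `ex(P,m,n) = ex(P',m-1,n-1) + m + n - 1` and
`sat(P,m,n) = sat(P',m-1,n-1) + m + n - 1`. -/
theorem sat_ex_extendCorner {k l : ℕ} (A : Fin k → Fin l → Bool) :
    ∃ m₀ n₀ : ℕ, ∀ m n : ℕ, m₀ ≤ m → n₀ ≤ n →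
      exF (extendCorner (extendCorner A)) m n
          = exF (extendCorner A) (m - 1) (n - 1) + m + n - 1 ∧
      satF (extendCorner (extendCorner A)) m n
          = satF (extendCorner A) (m - 1) (n - 1) + m + n - 1 := by
  refine ⟨1, 1, fun m n hm hn => ?_⟩
  obtain ⟨m', rfl⟩ : ∃ m', m = m' + 1 := ⟨m - 1, by omega⟩
  obtain ⟨n', rfl⟩ : ∃ n', n = n' + 1 := ⟨n - 1, by omega⟩
  have hQc : extendCorner A (Fin.last k) (Fin.last l) = true := SatEx.ec_corner A
  have hQd : ∀ i j, extendCorner A i j = true →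
      (i = Fin.last k ∧ j = Fin.last l) ∨ (i ≠ Fin.last k ∧ j ≠ Fin.last l) :=
    fun _ _ h => SatEx.ec_dichot h
  have h1 := SatEx.ex_step (extendCorner A) hQc m' n'
  have h2 := SatEx.sat_step (extendCorner A) hQc hQd m' n'
  have e1 : m' + 1 - 1 = m' := by omega
  have e2 : n' + 1 - 1 = n' := by omega
  rw [e1, e2]
  omega
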